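/- Let X and Y be independent random variables with Gamma distributions of shape m, rate λ and shape n, rate μ respectively (m, n positive integers, λ, μ > 0), and define Z = max{0, (X(Y−1)−1)/(2(Y + X + 1))}. Then for every t ≥ 0, Pr(Z ≤ t) = F_X(2t) + ∫_{2t}^∞ F_Y((2t+1)(1+x)/(x−2t)) f_X(x) dx, where F_X, F_Y are the cumulative distribution functions and f_X is the density of X. -/

import Mathlib

open MeasureTheory ProbabilityTheory

theorem stmt_10 {Ω : Type*} [MeasurableSpace Ω] (P : Measure Ω) [IsProbabilityMeasure P]
    (m n : ℕ) (hm : 0 < m) (hn : 0 < n) (lam mu : ℝ) (hlam : 0 < lam) (hmu : 0 < mu)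
    (X Y : Ω → ℝ) (hX : Measurable X) (hY : Measurable Y)
    (hXlaw : P.map X = gammaMeasure m lam) (hYlaw : P.map Y = gammaMeasure n mu)
    (hindep : IndepFun X Y P)
    (Z : Ω → ℝ) (hZ : Z = fun ω => max 0 ((X ω * (Y ω - 1) - 1) / (2 * (Y ω + X ω + 1))))
    (t : ℝ) (ht : 0 ≤ t) :
    (P {ω | Z ω ≤ t}).toReal
      = (P {ω | X ω ≤ 2 * t}).toReal
        + ∫ x in Set.Ioi (2 * t),
            (P {ω | Y ω ≤ (2 * t + 1) * (1 + x) / (x - 2 * t)}).toReal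
              * gammaPDFReal m lam x := by
  have hmn : (0:ℝ) < (m:ℝ) := by exact_mod_cast hm
  have hnn : (0:ℝ) < (n:ℝ) := by exact_mod_cast hn
  set g : ℝ → ℝ := fun x => (2 * t + 1) * (1 + x) / (x - 2 * t) with hgdef
  have hgmeas : Measurable g :=
    (measurable_const.mul (measurable_const.add measurable_id)).div
      (measurable_id.sub measurable_const)
  -- a.s. positivity of X and Y
  have hIic0 : ∀ (a r : ℝ), gammaMeasure a r (Set.Iic 0) = 0 := by
    intro a r
    have h1 : gammaMeasure a r (Set.Iio 0) = 0 := by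
      rw [gammaMeasure, withDensity_apply _ measurableSet_Iio]
      exact lintegral_gammaPDF_of_nonpos le_rfl
    have h2 : gammaMeasure a r {(0:ℝ)} = 0 := by
      rw [gammaMeasure, withDensity_apply _ (measurableSet_singleton _),
        Measure.restrict_eq_zero.mpr (by simp), lintegral_zero_measure]
    have : Set.Iic (0:ℝ) = Set.Iio 0 ∪ {0} := by
      ext x; simp [le_iff_lt_or_eq]
    rw [this]
    exact le_antisymm ((measure_union_le _ _).trans (by rw [h1, h2]; simp)) zero_le
  have hXpos : ∀ᵐ ω ∂P, 0 < X ω := by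
    have : P (X ⁻¹' Set.Iic 0) = 0 := by
      rw [← Measure.map_apply hX measurableSet_Iic, hXlaw, hIic0]
    filter_upwards [measure_eq_zero_iff_ae_notMem.mp this] with ω hω
    simpa using hω
  have hYpos : ∀ᵐ ω ∂P, 0 < Y ω := by
    have : P (Y ⁻¹' Set.Iic 0) = 0 := by
      rw [← Measure.map_apply hY measurableSet_Iic, hYlaw, hIic0]
    filter_upwards [measure_eq_zero_iff_ae_notMem.mp this] with ω hω
    simpa using hω
  -- pointwise equivalence
  have hequiv : ∀ x y : ℝ, 0 < x → 0 < y →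
      (max 0 ((x * (y - 1) - 1) / (2 * (y + x + 1))) ≤ t ↔
        (x ≤ 2 * t ∨ (2 * t < x ∧ y ≤ g x))) := by
    intro x y hx hy
    have hden : 0 < 2 * (y + x + 1) := by linarith
    rw [max_le_iff, and_iff_right ht, div_le_iff₀ hden]
    constructor
    · intro h
      rcases le_or_gt x (2 * t) with hle | hlt
      · exact Or.inl hle
      · refine Or.inr ⟨hlt, ?_⟩
        rw [hgdef]
        rw [le_div_iff₀ (by linarith)]
        nlinarith
    · rintro (hle | ⟨hlt, hyg⟩)
      · nlinarith [mul_nonneg hy.le (sub_nonneg.mpr hle)]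
      · rw [hgdef, le_div_iff₀ (by linarith)] at hyg
        nlinarith
  -- event decomposition
  set A : Set Ω := {ω | X ω ≤ 2 * t} with hA
  set S : Set (ℝ × ℝ) := {p | 2 * t < p.1 ∧ p.2 ≤ g p.1} with hS
  have hSmeas : MeasurableSet S :=
    (measurableSet_lt measurable_const measurable_fst).inter
      (measurableSet_le measurable_snd (hgmeas.comp measurable_fst))
  set B : Set Ω := (fun ω => (X ω, Y ω)) ⁻¹' S with hB
  have hBmeas : MeasurableSet B := (hX.prodMk hY) hSmeas
  have hset : ({ω | Z ω ≤ t} : Set Ω) =ᵐ[P] ((A ∪ B : Set Ω) : Set Ω) := by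
    rw [Filter.eventuallyEq_set]
    filter_upwards [hXpos, hYpos] with ω hx hy
    simp only [hZ, Set.mem_setOf_eq, Set.mem_union, hA, hB, hS, Set.mem_preimage]
    exact hequiv (X ω) (Y ω) hx hy
  have hdisj : Disjoint A B := by
    rw [Set.disjoint_left]
    intro ω hωA hωB
    simp only [hA, Set.mem_setOf_eq] at hωA
    have : 2 * t < X ω := hωB.1
    linarith
  have hsum : P {ω | Z ω ≤ t} = P A + P B := by
    rw [measure_congr hset, measure_union hdisj hBmeas]
  -- compute P B
  have hmap : P.map (fun ω => (X ω, Y ω)) = (P.map X).prod (P.map Y) :=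
    (indepFun_iff_map_prod_eq_prod_map_map hX.aemeasurable hY.aemeasurable).mp hindep
  have : IsProbabilityMeasure (gammaMeasure (n:ℝ) mu) := isProbabilityMeasure_gammaMeasure hnn hmu
  have hPB : P B = ∫⁻ x in Set.Ioi (2 * t),
      gammaMeasure n mu (Set.Iic (g x)) ∂(gammaMeasure m lam) := by
    rw [hB, ← Measure.map_apply (hX.prodMk hY) hSmeas, hmap, hXlaw, hYlaw,
      Measure.prod_apply hSmeas]
    have hkey : ∀ x : ℝ, gammaMeasure n mu (Prod.mk x ⁻¹' S)
        = Set.indicator (Set.Ioi (2 * t)) (fun x => gammaMeasure n mu (Set.Iic (g x))) x := by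
      intro x
      by_cases hx : 2 * t < x
      · have : Prod.mk x ⁻¹' S = Set.Iic (g x) := by
          ext y; simp [hS, hx]
        rw [this]
        exact (Set.indicator_of_mem (Set.mem_Ioi.mpr hx)
          (fun x => gammaMeasure n mu (Set.Iic (g x)))).symm
      · have : Prod.mk x ⁻¹' S = ∅ := by
          ext y; simp [hS, hx]
        rw [this, measure_empty,
          Set.indicator_of_notMem (by simpa using hx)]
    simp_rw [hkey]
    rw [lintegral_indicator measurableSet_Ioi]
  -- turn the gamma-measure integral into a Lebesgue integral
  have hFmeas : Measurable fun x => gammaMeasure n mu (Set.Iic (g x)) := by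
    have hmono : Monotone fun s : ℝ => gammaMeasure n mu (Set.Iic s) :=
      fun a b hab => measure_mono (Set.Iic_subset_Iic.mpr hab)
    exact hmono.measurable.comp hgmeas
  have hPB2 : P B = ∫⁻ x in Set.Ioi (2 * t),
      gammaPDF m lam x * gammaMeasure n mu (Set.Iic (g x)) := by
    rw [hPB, gammaMeasure, setLIntegral_withDensity_eq_setLIntegral_mul _
      (show Measurable (gammaPDF (m : ℝ) lam) from
        (measurable_gammaPDFReal m lam).ennreal_ofReal) hFmeas measurableSet_Ioi]
    rfl
  -- pass to toReal
  have hfin : ∀ x : ℝ, gammaPDF m lam x * gammaMeasure n mu (Set.Iic (g x)) < ⊤ := by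
    intro x
    exact ENNReal.mul_lt_top ENNReal.ofReal_lt_top (measure_lt_top _ _)
  have htoReal : (P B).toReal = ∫ x in Set.Ioi (2 * t),
      (gammaMeasure n mu (Set.Iic (g x))).toReal * gammaPDFReal m lam x := by
    have hmeasf : AEMeasurable
        (fun x => gammaPDF (m : ℝ) lam x * gammaMeasure n mu (Set.Iic (g x)))
        ((volume : Measure ℝ).restrict (Set.Ioi (2 * t))) :=
      (((measurable_gammaPDFReal m lam).ennreal_ofReal.mul hFmeas).aemeasurable.restrict)
    rw [hPB2, ← integral_toReal hmeasf (Filter.Eventually.of_forall fun x => hfin x)]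
    refine integral_congr_ae (Filter.Eventually.of_forall fun x => ?_)
    simp only [gammaPDF, ENNReal.toReal_mul,
      ENNReal.toReal_ofReal (gammaPDFReal_nonneg hmn hlam x)]
    exact mul_comm _ _
  -- rewrite the probabilities in the statement
  have hYprob : ∀ x : ℝ, P {ω | Y ω ≤ (2 * t + 1) * (1 + x) / (x - 2 * t)}
      = gammaMeasure n mu (Set.Iic (g x)) := by
    intro x
    have : {ω | Y ω ≤ (2 * t + 1) * (1 + x) / (x - 2 * t)} = Y ⁻¹' Set.Iic (g x) := rfl
    rw [this, ← Measure.map_apply hY measurableSet_Iic, hYlaw]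
  have hAfin : P A ≠ ⊤ := measure_ne_top _ _
  have hBfin : P B ≠ ⊤ := measure_ne_top _ _
  rw [hsum, ENNReal.toReal_add hAfin hBfin, htoReal]
  congr 1
  refine integral_congr_ae (Filter.Eventually.of_forall fun x => ?_)
  simp only [hYprob x]
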